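/- If on the event that both confidence intervals hold the UCB algorithm selects a suboptimal arm i at time t, then \mu_i + 2\sqrt{2\log(t)/N_{i,t-1}} \ge \mu^*, which implies N_{i,t-1} \le 8\log(t)/\Delta_i^2. -/
import Mathlib

/-- If, on the event where both confidence intervals hold, the UCB algorithm selects a
suboptimal arm `i` at time `t`, then `μ_i + 2√(2 log t / N_i) ≥ μ*`, which implies
`N_i ≤ 8 log t / Δ_i²`. -/
theorem ucb_suboptimal_selection_bound
    (μi μstar : ℝ) (hgap : 0 < μstar - μi)
    (mi mstar : ℝ)            -- empirical means of arm `i` and of the optimal arm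
    (ni nstar : ℝ)            -- numbers of past pulls of the two arms
    (hni : 0 < ni) (hnstar : 0 < nstar)
    (t : ℝ) (ht : 1 ≤ t)
    -- selection of arm `i` at time `t`:
    (hsel : mstar + Real.sqrt (2 * Real.log t / nstar)
      ≤ mi + Real.sqrt (2 * Real.log t / ni))
    -- confidence events for both arms:
    (hconf_i : |mi - μi| ≤ Real.sqrt (2 * Real.log t / ni))
    (hconf_star : |mstar - μstar| ≤ Real.sqrt (2 * Real.log t / nstar)) :
    μstar ≤ μi + 2 * Real.sqrt (2 * Real.log t / ni)
      ∧ ni ≤ 8 * Real.log t / (μstar - μi) ^ 2 := by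
  have hL : 0 ≤ Real.log t := Real.log_nonneg ht
  have h1 := abs_le.1 hconf_i
  have h2 := abs_le.1 hconf_star
  have hmain : μstar ≤ μi + 2 * Real.sqrt (2 * Real.log t / ni) := by
    nlinarith [h1.2, h2.1, hsel]
  refine ⟨hmain, ?_⟩
  have harg : 0 ≤ 2 * Real.log t / ni := by positivity
  have hsq : Real.sqrt (2 * Real.log t / ni) ^ 2 = 2 * Real.log t / ni :=
    Real.sq_sqrt harg
  have hΔ : μstar - μi ≤ 2 * Real.sqrt (2 * Real.log t / ni) := by linarith
  have h4 : (μstar - μi) ^ 2 ≤ 4 * (2 * Real.log t / ni) := by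
    nlinarith [Real.sqrt_nonneg (2 * Real.log t / ni)]
  rw [le_div_iff₀ (by positivity : (0:ℝ) < (μstar - μi) ^ 2)]
  have := mul_le_mul_of_nonneg_right h4 hni.le
  have h5 : 2 * Real.log t / ni * ni = 2 * Real.log t := by field_simp
  nlinarith
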